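/- Let t be a smooth function on U ⊂ ℝ⁵ implicitly defined by F(x⁰ + x¹x⁴ + 3tx²x⁴ − t³(x⁴)², x¹ + t³x⁴, x² − t²x⁴, x³ + tx⁴, t) = 0, where F is a smooth function of five variables and the implicit function theorem applies (the total derivative of the left side with respect to t is nonzero). Then t satisfies the PDE (x¹+3tx²)t_{x⁰} + t³t_{x¹} − t²t_{x²} + t·t_{x³} − t_{x⁴} = 0. (Kerr theorem for contact Engel structures, one direction.) -/

import Mathlib

/-- The map `(x, τ) ↦ (x⁰ + x¹x⁴ + 3τx²x⁴ − τ³(x⁴)², x¹ + τ³x⁴, x² − τ²x⁴, x³ + τx⁴, τ)`. -/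
def PhiK (x : Fin 5 → ℝ) (τ : ℝ) : Fin 5 → ℝ :=
  ![x 0 + x 1 * x 4 + 3 * τ * x 2 * x 4 - τ ^ 3 * (x 4) ^ 2,
    x 1 + τ ^ 3 * x 4,
    x 2 - τ ^ 2 * x 4,
    x 3 + τ * x 4,
    τ]

/-- Kerr theorem for contact Engel structures (one direction): a smooth function `t`
implicitly defined by `F(PhiK x (t x)) = 0`, with the implicit function theorem
applicable, satisfies the integrability PDE
`(x¹+3tx²)t_{x⁰} + t³t_{x¹} − t²t_{x²} + t·t_{x³} − t_{x⁴} = 0`. -/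
theorem kerr_theorem_for_contact_Engel
    (U : Set (Fin 5 → ℝ)) (hU : IsOpen U)
    (F : (Fin 5 → ℝ) → ℝ) (hF : ContDiff ℝ (⊤ : ℕ∞) F)
    (t : (Fin 5 → ℝ) → ℝ) (ht : ContDiffOn ℝ (⊤ : ℕ∞) t U)
    (h0 : ∀ x ∈ U, F (PhiK x (t x)) = 0)
    (hnd : ∀ x ∈ U, deriv (fun τ => F (PhiK x τ)) (t x) ≠ 0) :
    ∀ x ∈ U,
      (x 1 + 3 * t x * x 2) * fderiv ℝ t x (Pi.single (0 : Fin 5) 1) +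
        (t x) ^ 3 * fderiv ℝ t x (Pi.single (1 : Fin 5) 1) -
        (t x) ^ 2 * fderiv ℝ t x (Pi.single (2 : Fin 5) 1) +
        t x * fderiv ℝ t x (Pi.single (3 : Fin 5) 1) -
        fderiv ℝ t x (Pi.single (4 : Fin 5) 1) = 0 := by
  intro x hx
  have htx : DifferentiableAt ℝ t x :=
    (ht.contDiffAt (hU.mem_nhds hx)).differentiableAt (by simp)
  -- direction vector
  set V : Fin 5 → ℝ := ![x 1 + 3 * t x * x 2, t x ^ 3, -(t x ^ 2), t x, -1] with hVdef
  set c : ℝ := fderiv ℝ t x V with hcdef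
  have hx0 : x + (0:ℝ) • V = x := by simp
  -- the curve s ↦ x + s • V
  have hy : ∀ i : Fin 5, HasDerivAt (fun s : ℝ => (x + s • V) i) (V i) 0 := by
    intro i
    simpa using ((hasDerivAt_mul_const (V i)).const_add (x i))
  have hcurve : HasDerivAt (fun s : ℝ => x + s • V) V 0 := hasDerivAt_pi.mpr hy
  -- u s = t (x + s • V)
  have hu : HasDerivAt (fun s : ℝ => t (x + s • V)) c 0 := by
    have hf : HasFDerivAt t (fderiv ℝ t x) (x + (0:ℝ) • V) := by
      rw [hx0]; exact htx.hasFDerivAt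
    exact hf.comp_hasDerivAt 0 hcurve
  -- τ-derivative of PhiK x · at t x
  set q' : Fin 5 → ℝ := ![3 * x 2 * x 4 - 3 * t x ^ 2 * (x 4) ^ 2,
      3 * t x ^ 2 * x 4, -(2 * t x * x 4), x 4, 1] with hq'def
  have hq : HasDerivAt (fun τ => PhiK x τ) q' (t x) := by
    rw [hasDerivAt_pi]
    intro i
    fin_cases i
    · show HasDerivAt (fun τ : ℝ => x 0 + x 1 * x 4 + 3 * τ * x 2 * x 4 - τ ^ 3 * (x 4) ^ 2)
        (3 * x 2 * x 4 - 3 * t x ^ 2 * (x 4) ^ 2) (t x)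
      have h := ((((hasDerivAt_id' (x := t x)).const_mul 3).mul_const (x 2)).mul_const
          (x 4)).const_add (x 0 + x 1 * x 4) |>.sub
          (((hasDerivAt_id' (x := t x)).pow 3).mul_const ((x 4) ^ 2))
      refine h.congr_deriv ?_
      ring
    · show HasDerivAt (fun τ : ℝ => x 1 + τ ^ 3 * x 4) (3 * t x ^ 2 * x 4) (t x)
      have h := (((hasDerivAt_id' (x := t x)).pow 3).mul_const (x 4)).const_add (x 1)
      refine h.congr_deriv ?_
      ring
    · show HasDerivAt (fun τ : ℝ => x 2 - τ ^ 2 * x 4) (-(2 * t x * x 4)) (t x)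
      have h := (hasDerivAt_const (t x) (x 2)).sub
          (((hasDerivAt_id' (x := t x)).pow 2).mul_const (x 4))
      refine h.congr_deriv ?_
      ring
    · show HasDerivAt (fun τ : ℝ => x 3 + τ * x 4) (x 4) (t x)
      have h := ((hasDerivAt_id' (x := t x)).mul_const (x 4)).const_add (x 3)
      refine h.congr_deriv ?_
      ring
    · show HasDerivAt (fun τ : ℝ => τ) 1 (t x)
      exact hasDerivAt_id (t x)
  -- the curve s ↦ PhiK (x + s•V) (t (x + s•V)) has derivative c • q'
  have hW : HasDerivAt (fun s : ℝ => PhiK (x + s • V) (t (x + s • V))) (c • q') 0 := by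
    rw [hasDerivAt_pi]
    intro i
    fin_cases i
    · show HasDerivAt (fun s : ℝ => (x + s • V) 0 + (x + s • V) 1 * (x + s • V) 4
          + 3 * t (x + s • V) * (x + s • V) 2 * (x + s • V) 4
          - (t (x + s • V)) ^ 3 * ((x + s • V) 4) ^ 2)
        (c * (3 * x 2 * x 4 - 3 * t x ^ 2 * (x 4) ^ 2)) 0
      have h := (((hy 0).add ((hy 1).mul (hy 4))).add
          (((hu.const_mul 3).mul (hy 2)).mul (hy 4))).sub ((hu.pow 3).mul ((hy 4).pow 2))
      refine h.congr_deriv ?_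
      simp only [Pi.pow_apply, Pi.mul_apply, hx0]; simp [hVdef]
      try ring
    · show HasDerivAt (fun s : ℝ => (x + s • V) 1 + (t (x + s • V)) ^ 3 * (x + s • V) 4)
        (c * (3 * t x ^ 2 * x 4)) 0
      have h := (hy 1).add ((hu.pow 3).mul (hy 4))
      refine h.congr_deriv ?_
      simp only [Pi.pow_apply, Pi.mul_apply, hx0]; simp [hVdef]
      try ring
    · show HasDerivAt (fun s : ℝ => (x + s • V) 2 - (t (x + s • V)) ^ 2 * (x + s • V) 4)
        (c * (-(2 * t x * x 4))) 0
      have h := (hy 2).sub ((hu.pow 2).mul (hy 4))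
      refine h.congr_deriv ?_
      simp only [Pi.pow_apply, Pi.mul_apply, hx0]; simp [hVdef]
      try ring
    · show HasDerivAt (fun s : ℝ => (x + s • V) 3 + t (x + s • V) * (x + s • V) 4)
        (c * x 4) 0
      have h := (hy 3).add (hu.mul (hy 4))
      refine h.congr_deriv ?_
      simp [hx0, hVdef]
      try ring
    · show HasDerivAt (fun s : ℝ => t (x + s • V)) (c * 1) 0
      simpa using hu
  -- F is differentiable
  set A := fderiv ℝ F (PhiK x (t x)) with hAdef
  have hFd : HasFDerivAt F A (PhiK x (t x)) :=
    ((hF.differentiable (by simp)) (PhiK x (t x))).hasFDerivAt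
  -- deriv of F ∘ PhiK x at t x is A q'
  have hFq : HasDerivAt (fun τ => F (PhiK x τ)) (A q') (t x) :=
    hFd.comp_hasDerivAt (t x) hq
  have hAq : A q' ≠ 0 := by
    have := hFq.deriv
    rw [← this]
    exact hnd x hx
  -- deriv of F along the curve
  have hFW : HasDerivAt (fun s : ℝ => F (PhiK (x + s • V) (t (x + s • V)))) (A (c • q')) 0 := by
    have hFd' : HasFDerivAt F A (PhiK (x + (0:ℝ) • V) (t (x + (0:ℝ) • V))) := by
      rw [hx0]; exact hFd
    exact hFd'.comp_hasDerivAt 0 hW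
  -- but F along the curve is eventually 0
  have hev : ∀ᶠ s in nhds (0:ℝ), F (PhiK (x + s • V) (t (x + s • V))) = 0 := by
    have hcont : Continuous fun s : ℝ => x + s • V :=
      continuous_const.add (continuous_id.smul continuous_const)
    have hmem : ∀ᶠ s in nhds (0:ℝ), x + s • V ∈ U := by
      have h1 := hcont.continuousAt (x := (0:ℝ))
      have hm : U ∈ nhds (x + (0:ℝ) • V) := by rw [hx0]; exact hU.mem_nhds hx
      exact h1.preimage_mem_nhds hm
    filter_upwards [hmem] with s hs
    exact h0 _ hs
  have hzero : HasDerivAt (fun _ : ℝ => (0:ℝ)) (A (c • q')) 0 :=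
    hFW.congr_of_eventuallyEq (by filter_upwards [hev] with s hs using hs.symm)
  have hAcq : A (c • q') = 0 :=
    ((hasDerivAt_const (0:ℝ) (0:ℝ)).unique hzero).symm
  have hc0 : c = 0 := by
    rw [map_smul, smul_eq_mul] at hAcq
    rcases mul_eq_zero.mp hAcq with h | h
    · exact h
    · exact absurd h hAq
  -- decompose V in the standard basis
  have hVdec : V = (x 1 + 3 * t x * x 2) • (Pi.single (0 : Fin 5) (1:ℝ) : Fin 5 → ℝ)
      + (t x ^ 3) • (Pi.single (1 : Fin 5) (1:ℝ) : Fin 5 → ℝ)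
      + (-(t x ^ 2)) • (Pi.single (2 : Fin 5) (1:ℝ) : Fin 5 → ℝ)
      + (t x) • (Pi.single (3 : Fin 5) (1:ℝ) : Fin 5 → ℝ)
      + (-1 : ℝ) • (Pi.single (4 : Fin 5) (1:ℝ) : Fin 5 → ℝ) := by
    funext i
    fin_cases i <;> simp [hVdef, Pi.single_apply]
  have hlin : c = (x 1 + 3 * t x * x 2) * fderiv ℝ t x (Pi.single (0 : Fin 5) 1)
      + (t x ^ 3) * fderiv ℝ t x (Pi.single (1 : Fin 5) 1)
      + (-(t x ^ 2)) * fderiv ℝ t x (Pi.single (2 : Fin 5) 1)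
      + (t x) * fderiv ℝ t x (Pi.single (3 : Fin 5) 1)
      + (-1) * fderiv ℝ t x (Pi.single (4 : Fin 5) 1) := by
    rw [hcdef, hVdec]
    simp [map_add, map_smul]
  rw [hc0] at hlin
  linarith
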